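/- The effective resistance between nodes i and j in the configuration graph with degree sequence k (complete graph with link weights c_{ij} = k_i k_j/(2m - 1)) equals ((2m-1)/(2m))·(1/k_i + 1/k_j), where 2m = ∑_i k_i. -/

import Mathlib

open Finset Matrix

/-- The effective resistance between nodes `i ≠ j` in the configuration graph with degree
sequence `k` (complete graph with link weights `c_{ij} = k_i k_j/(2m - 1)`, `2m = ∑ k_i`)
equals `((2m-1)/(2m)) (1/k_i + 1/k_j)`. -/
theorem configuration_graph_effective_resistance {n : ℕ} (k : Fin n → ℝ)
    (hk : ∀ i, 0 < k i) (S : ℝ) (hS : S = ∑ i, k i) (hS1 : 1 < S)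
    (Q Qd : Matrix (Fin n) (Fin n) ℝ)
    (hQ : ∀ i j, Q i j =
      if i = j then k i * (S - k i) / (S - 1) else -(k i * k j / (S - 1)))
    (h1 : Q * Qd * Q = Q) (h2 : Qd * Q * Qd = Qd)
    (h3 : (Q * Qd)ᵀ = Q * Qd) (h4 : (Qd * Q)ᵀ = Qd * Q)
    (hconn : Q * Qd = 1 - ((n : ℝ))⁻¹ • Matrix.of (fun _ _ => (1 : ℝ)))
    (Ω : Matrix (Fin n) (Fin n) ℝ)
    (hΩ : ∀ i j, Ω i j =
      (Pi.single i 1 - Pi.single j 1) ⬝ᵥ Qd *ᵥ (Pi.single i 1 - Pi.single j 1)) :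
    ∀ i j : Fin n, i ≠ j → Ω i j = ((S - 1) / S) * (1 / k i + 1 / k j) := by
  intro i j hij
  have hS1' : S - 1 ≠ 0 := by linarith
  have hS0 : S ≠ 0 := by linarith
  have hQsym : Qᵀ = Q := by
    ext a b
    simp only [transpose_apply, hQ]
    rcases eq_or_ne a b with rfl | h
    · simp
    · rw [if_neg h, if_neg (Ne.symm h)]; ring
  -- explicit solution x with Q *ᵥ x = e_i - e_j
  set x : Fin n → ℝ := fun t =>
    (S - 1) / S * ((Pi.single i (1 / k i) : Fin n → ℝ) t - (Pi.single j (1 / k j) : Fin n → ℝ) t) with hx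
  have hQx : Q *ᵥ x = Pi.single i 1 - Pi.single j 1 := by
    funext a
    have hxd : x = ((S - 1) / S) •
        ((Pi.single i (1 / k i) : Fin n → ℝ) - Pi.single j (1 / k j)) := by
      funext t; simp [hx, smul_eq_mul]
    rw [hxd, mulVec_smul, mulVec_sub]
    simp only [Pi.smul_apply, Pi.sub_apply, mulVec_single, smul_eq_mul, op_smul_eq_mul, col_apply]
    have hki := (hk i).ne'
    have hkj := (hk j).ne'
    have hka := (hk a).ne'
    rcases eq_or_ne a i with rfl | hai
    · rw [hQ a a, hQ a j, if_pos rfl, if_neg hij]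
      simp only [Pi.sub_apply, Pi.single_eq_same, Pi.single_eq_of_ne hij]
      field_simp
      ring
    · rcases eq_or_ne a j with rfl | haj
      · rw [hQ a i, hQ a a, if_neg (Ne.symm hij), if_pos rfl]
        simp only [Pi.sub_apply, Pi.single_eq_of_ne hai, Pi.single_eq_same]
        field_simp
        ring
      · rw [hQ a i, hQ a j, if_neg hai, if_neg haj]
        simp only [Pi.sub_apply, Pi.single_eq_of_ne hai, Pi.single_eq_of_ne haj]
        field_simp
        ring
  have key : Ω i j = x ⬝ᵥ (Pi.single i 1 - Pi.single j 1) := by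
    have hQxv : Q *ᵥ x = x ᵥ* Qᵀ := by rw [vecMul_transpose]
    calc Ω i j = (Q *ᵥ x) ⬝ᵥ Qd *ᵥ (Q *ᵥ x) := by rw [hΩ i j, hQx]
      _ = (x ᵥ* Qᵀ) ⬝ᵥ ((Qd * Q) *ᵥ x) := by rw [mulVec_mulVec, hQxv]
      _ = x ⬝ᵥ (Qᵀ *ᵥ ((Qd * Q) *ᵥ x)) := by
            rw [dotProduct_mulVec, vecMul_vecMul, ← dotProduct_mulVec, ← mulVec_mulVec]
      _ = x ⬝ᵥ ((Q * (Qd * Q)) *ᵥ x) := by rw [hQsym, mulVec_mulVec]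
      _ = x ⬝ᵥ (Q *ᵥ x) := by rw [← mul_assoc, h1]
      _ = x ⬝ᵥ (Pi.single i 1 - Pi.single j 1) := by rw [hQx]
  rw [key]
  rw [dotProduct_sub, dotProduct_single, dotProduct_single, mul_one, mul_one]
  simp only [hx, Pi.single_eq_same, Pi.single_eq_of_ne' hij, Pi.single_eq_of_ne' (Ne.symm hij)]
  ring
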